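/- Let d ≥ 2 and let a₁,…,a_d be indeterminates. The generic monic polynomial of degree d, f(x) = x^d + a₁x^{d−1} + ⋯ + a_d, is indecomposable as a one-variable polynomial in x over the rational function field ℚ(a₁,…,a_d). -/

import Mathlib

open Polynomial

open TrivSqZeroExt

set_option maxHeartbeats 1000000
set_option synthInstance.maxHeartbeats 400000

/-- A one-variable polynomial over a field is indecomposable if it is non-constant and
cannot be written as `u ∘ g` with both `u` and `g` of degree at least 2. -/
def IndecomposablePoly {K : Type*} [Field K] (f : K[X]) : Prop :=
  0 < f.natDegree ∧
    ¬ ∃ u g : K[X], 2 ≤ u.natDegree ∧ 2 ≤ g.natDegree ∧ f = u.comp g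

/-- The field `ℚ(a₁,…,a_d)` of rational functions in `d` indeterminates over `ℚ`. -/
abbrev GenericCoeffField (d : ℕ) : Type :=
  FractionRing (MvPolynomial (Fin d) ℚ)

/-- The generic monic polynomial of degree `d`:
`f(x) = x^d + a₁x^{d-1} + ⋯ + a_d ∈ ℚ(a₁,…,a_d)[x]`,
where `a_{i+1}` (for `i : Fin d`) is the coefficient of `x^{d-1-i}`. -/
noncomputable def genericMonic (d : ℕ) : Polynomial (GenericCoeffField d) :=
  Polynomial.X ^ d +
    ∑ i : Fin d,
      Polynomial.C
          (algebraMap (MvPolynomial (Fin d) ℚ) (GenericCoeffField d) (MvPolynomial.X i)) *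
        Polynomial.X ^ (d - 1 - (i : ℕ))

section Deriv
variable {d : ℕ}
local notation "R" => MvPolynomial (Fin d) ℚ
local notation "L" => GenericCoeffField d

/-- The ring hom `R → L[ε]` sending `r ↦ (r, ∂ₗ r)`. -/
noncomputable def derivHom (l : Fin d) : R →+* TrivSqZeroExt L L where
  toFun r := ⟨algebraMap R L r, algebraMap R L (MvPolynomial.pderiv l r)⟩
  map_one' := by apply TrivSqZeroExt.ext <;> simp [fst_mk, snd_mk]
  map_mul' r s := by
    apply TrivSqZeroExt.ext
    · erw [fst_mul]; simp [fst_mk, fst_mul]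
    · erw [snd_mul]; simp only [snd_mul, fst_mk, snd_mk, Derivation.leibniz, smul_eq_mul, map_add, map_mul,
        op_smul_eq_smul]
  map_zero' := by apply TrivSqZeroExt.ext <;> simp [fst_mk, snd_mk]
  map_add' r s := by
    apply TrivSqZeroExt.ext
    · erw [fst_add]; simp [fst_mk, snd_mk, fst_add, snd_add]
    · erw [snd_add]; simp [fst_mk, snd_mk, fst_add, snd_add]

@[simp] lemma derivHom_apply (l : Fin d) (r : R) :
    derivHom l r = ⟨algebraMap R L r, algebraMap R L (MvPolynomial.pderiv l r)⟩ := rfl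

lemma derivHom_isUnit (l : Fin d) {y : R} (hy : y ∈ nonZeroDivisors R) :
    IsUnit (derivHom l y) := by
  rw [TrivSqZeroExt.isUnit_iff_isUnit_fst]
  have hy0 : y ≠ 0 := nonZeroDivisors.ne_zero hy
  have : algebraMap R L y ≠ 0 :=
    (map_ne_zero_iff _ (IsFractionRing.injective R L)).2 hy0
  exact this.isUnit

/-- The extension of `derivHom` to the fraction field. -/
noncomputable def derivLift (l : Fin d) : L →+* TrivSqZeroExt L L :=
  IsLocalization.lift (M := nonZeroDivisors R) (g := derivHom l)
    (fun y => derivHom_isUnit l y.2)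

@[simp] lemma derivLift_algebraMap (l : Fin d) (r : R) :
    derivLift l (algebraMap R L r) = derivHom l r :=
  IsLocalization.lift_eq _ r

lemma derivLift_fst (l : Fin d) (x : L) : (derivLift l x).fst = x := by
  have h : ((fstHom L L L : TrivSqZeroExt L L →ₐ[L] L) :
      TrivSqZeroExt L L →+* L).comp (derivLift l) = RingHom.id L := by
    apply IsLocalization.ringHom_ext (nonZeroDivisors R)
    apply RingHom.ext
    intro r
    show ((derivLift l) ((algebraMap R L) r)).fst = algebraMap R L r
    rw [derivLift_algebraMap]
    rfl
  exact RingHom.congr_fun h x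

/-- The partial derivative on the fraction field. -/
noncomputable def pd (l : Fin d) (x : L) : L := (derivLift l x).snd

@[simp] lemma pd_algebraMap (l : Fin d) (r : R) :
    pd l (algebraMap R L r) = algebraMap R L (MvPolynomial.pderiv l r) := by
  simp [pd]

lemma pd_add (l : Fin d) (x y : L) : pd l (x + y) = pd l x + pd l y := by
  simp [pd, map_add, snd_add]

lemma pd_mul (l : Fin d) (x y : L) : pd l (x * y) = x * pd l y + y * pd l x := by
  simp only [pd, map_mul, snd_mul, derivLift_fst, smul_eq_mul, op_smul_eq_smul]

lemma pd_ratCast (l : Fin d) (q : ℚ) : pd l (algebraMap ℚ L q) = 0 := by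
  rw [IsScalarTower.algebraMap_apply ℚ R L, pd_algebraMap]
  have : (algebraMap ℚ R q) = MvPolynomial.C q := rfl
  simp [this]

/-- The gradient vector of an element of `L`. -/
noncomputable def Dvec (x : L) : Fin d → L := fun l => pd l x

lemma Dvec_mem_span {T : Set L} {x : L} (hx : x ∈ Algebra.adjoin ℚ T) :
    Dvec x ∈ Submodule.span L (Dvec '' T) := by
  induction hx using Algebra.adjoin_induction with
  | mem s hs => exact Submodule.subset_span ⟨s, hs, rfl⟩
  | algebraMap q =>
      have h : Dvec (d := d) (algebraMap ℚ L q) = 0 := funext fun l => pd_ratCast l q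
      rw [h]; exact zero_mem _
  | add x y hx hy ihx ihy =>
      have h : Dvec (d := d) (x + y) = Dvec x + Dvec y := funext fun l => pd_add l x y
      rw [h]; exact add_mem ihx ihy
  | mul x y hx hy ihx ihy =>
      have h : Dvec (d := d) (x * y) = x • Dvec y + y • Dvec x := by
        funext l
        simp [Dvec, pd_mul, smul_eq_mul]
      rw [h]
      exact add_mem (Submodule.smul_mem _ _ ihy) (Submodule.smul_mem _ _ ihx)

lemma Dvec_X (i : Fin d) :
    Dvec (algebraMap R L (MvPolynomial.X i)) = Pi.single i 1 := by
  funext l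
  simp only [Dvec, pd_algebraMap, MvPolynomial.pderiv_X]
  rcases eq_or_ne l i with h | h
  · subst h; simp
  · simp [Pi.single_apply, h, Ne.symm h]

/-- If all the `aᵢ` lie in the `ℚ`-subalgebra generated by fewer than `d` elements,
we get a contradiction. -/
lemma card_contradiction {T : Finset L} (hT : T.card < d)
    (h : ∀ i : Fin d, algebraMap R L (MvPolynomial.X i) ∈ Algebra.adjoin ℚ (T : Set L)) :
    False := by
  classical
  set W : Submodule L (Fin d → L) :=
    Submodule.span L ((T.image Dvec : Finset (Fin d → L)) : Set (Fin d → L)) with hW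
  have hWsingle : ∀ i : Fin d, Pi.single i (1 : L) ∈ W := by
    intro i
    have := Dvec_mem_span (h i)
    rw [Dvec_X i] at this
    rwa [hW, Finset.coe_image]
  have htop : W = ⊤ := by
    rw [eq_top_iff, ← (Pi.basisFun L (Fin d)).span_eq, Submodule.span_le]
    rintro _ ⟨i, rfl⟩
    simpa [Pi.basisFun_apply] using hWsingle i
  have h1 : Module.finrank L (Fin d → L) ≤ (T.image Dvec).card := by
    calc Module.finrank L (Fin d → L) = Module.finrank L W := by
          rw [htop]; exact (finrank_top L _).symm
      _ ≤ (T.image Dvec).card := finrank_span_finset_le_card _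
  have h2 : Module.finrank L (Fin d → L) = d := by
    simp [Module.finrank_pi]
  have h3 : (T.image Dvec).card ≤ T.card := Finset.card_image_le
  omega

end Deriv

section Poly
variable {d : ℕ}
local notation "R" => MvPolynomial (Fin d) ℚ
local notation "L" => GenericCoeffField d

lemma genericMonic_sum_degree_lt (hd : 0 < d) :
    (∑ i : Fin d, Polynomial.C (algebraMap R L (MvPolynomial.X i)) *
        Polynomial.X ^ (d - 1 - (i : ℕ))).degree < (Polynomial.X ^ d : L[X]).degree := by
  rw [degree_X_pow]
  apply lt_of_le_of_lt (degree_sum_le _ _)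
  rw [Finset.sup_lt_iff (by exact_mod_cast WithBot.bot_lt_coe d)]
  intro i _
  apply lt_of_le_of_lt (degree_C_mul_X_pow_le _ _)
  exact_mod_cast Nat.lt_of_le_of_lt (Nat.sub_le _ _) (Nat.sub_lt hd one_pos)

lemma genericMonic_degree (hd : 0 < d) : (genericMonic d).degree = d := by
  rw [genericMonic, degree_add_eq_left_of_degree_lt (genericMonic_sum_degree_lt hd),
    degree_X_pow]

lemma genericMonic_natDegree (hd : 0 < d) : (genericMonic d).natDegree = d :=
  natDegree_eq_of_degree_eq_some (genericMonic_degree hd)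

lemma genericMonic_monic (hd : 0 < d) : (genericMonic d).Monic := by
  rw [genericMonic]
  exact (monic_X_pow d).add_of_left (genericMonic_sum_degree_lt hd)

lemma genericMonic_coeff (hd : 0 < d) (j : Fin d) :
    (genericMonic d).coeff (d - 1 - (j : ℕ)) = algebraMap R L (MvPolynomial.X j) := by
  have hj : (j : ℕ) ≤ d - 1 := by omega
  rw [genericMonic, coeff_add, finset_sum_coeff]
  simp only [coeff_C_mul, coeff_X_pow]
  rw [Finset.sum_eq_single j]
  · rw [if_pos rfl, mul_one, if_neg (by omega), zero_add]
  · intro i _ hij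
    rw [if_neg, mul_zero]
    intro hcontra
    apply hij
    have hi : (i : ℕ) ≤ d - 1 := by omega
    have : (i : ℕ) = (j : ℕ) := by omega
    exact Fin.ext this
  · intro hj'
    exact absurd (Finset.mem_univ j) hj'

end Poly

section Main
variable {d : ℕ}
local notation "R" => MvPolynomial (Fin d) ℚ
local notation "L" => GenericCoeffField d

theorem genericMonic_indecomposable' (hd : 2 ≤ d) :
    IndecomposablePoly (genericMonic d) := by
  classical
  have hd0 : 0 < d := by omega
  constructor
  · rw [genericMonic_natDegree hd0]; omega
  rintro ⟨u, g, hu, hg, hfug⟩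
  set m := u.natDegree with hm
  set n := g.natDegree with hn
  have hdmn : d = m * n := by
    rw [← genericMonic_natDegree hd0, hfug, natDegree_comp]
  have hg0 : g ≠ 0 := fun h => by simp [h] at hn; omega
  set l : L := g.leadingCoeff with hl
  have hl0 : l ≠ 0 := leadingCoeff_ne_zero.2 hg0
  set c : L := g.coeff 0 with hc
  set g₁ : L[X] := Polynomial.C l⁻¹ * (g - Polynomial.C c) with hg₁
  set u₁ : L[X] := u.comp (Polynomial.C l * Polynomial.X + Polynomial.C c) with hu₁
  -- the composition identity
  have hcomp : u₁.comp g₁ = u.comp g := by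
    rw [hu₁, comp_assoc]
    congr 1
    rw [add_comp, mul_comp, C_comp, X_comp, C_comp, hg₁, ← mul_assoc, ← C_mul,
      mul_inv_cancel₀ hl0, C_1, one_mul]
    ring
  have hgsub : (g - Polynomial.C c).natDegree = n := natDegree_sub_C
  have hgsub0 : g - Polynomial.C c ≠ 0 := fun h => by
    rw [h] at hgsub; simp at hgsub; omega
  have hg₁deg : g₁.natDegree = n := by
    rw [hg₁, natDegree_mul (by simp [hl0]) hgsub0, natDegree_C, hgsub, zero_add]
  have hgsublc : (g - Polynomial.C c).leadingCoeff = l := by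
    rw [leadingCoeff, hgsub, coeff_sub, coeff_C, if_neg (by omega), sub_zero, hl, leadingCoeff]
  have hg₁monic : g₁.Monic := by
    rw [Monic, hg₁, leadingCoeff_mul, leadingCoeff_C, hgsublc, inv_mul_cancel₀ hl0]
  have hg₁0 : g₁.coeff 0 = 0 := by
    rw [hg₁, coeff_C_mul, coeff_sub, coeff_C, if_pos rfl, hc, sub_self, mul_zero]
  have hlin : (Polynomial.C l * Polynomial.X + Polynomial.C c).natDegree = 1 :=
    natDegree_linear hl0
  have hu₁deg : u₁.natDegree = m := by
    rw [hu₁, natDegree_comp, hlin, mul_one]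
  have hfcomp : genericMonic d = u₁.comp g₁ := by rw [hcomp, hfug]
  have hu₁monic : u₁.Monic := by
    have h1 : (u₁.comp g₁).leadingCoeff = u₁.leadingCoeff * g₁.leadingCoeff ^ u₁.natDegree :=
      leadingCoeff_comp (by omega)
    have h2 : (u₁.comp g₁).leadingCoeff = 1 := by
      rw [← hfcomp]; exact genericMonic_monic hd0
    rw [h1, hg₁monic.leadingCoeff, one_pow, mul_one] at h2
    exact h2
  -- the finite set of coefficients
  set T : Finset L :=
    ((Finset.range m).image u₁.coeff) ∪ ((Finset.Ioo 0 n).image g₁.coeff) with hT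
  have hTcard : T.card < d := by
    have h1 : T.card ≤ m + (n - 1) := by
      calc T.card ≤ ((Finset.range m).image u₁.coeff).card +
            ((Finset.Ioo 0 n).image g₁.coeff).card := Finset.card_union_le _ _
        _ ≤ m + (n - 1) := by
            gcongr
            · exact le_trans Finset.card_image_le (by simp)
            · exact le_trans Finset.card_image_le (by simp)
    have h2 : m + n ≤ m * n := by nlinarith
    omega
  set A : Subalgebra ℚ L := Algebra.adjoin ℚ (T : Set L) with hA
  have hrange : ∀ x : L, x ∈ A → x ∈ Set.range (algebraMap A L) := fun x hx => ⟨⟨x, hx⟩, rfl⟩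
  have hu₁lift : u₁ ∈ lifts (algebraMap A L) := by
    rw [lifts_iff_coeff_lifts]
    intro k
    rcases lt_trichotomy k m with hk | hk | hk
    · apply hrange
      apply Algebra.subset_adjoin
      exact Finset.mem_union_left _ (Finset.mem_image.2 ⟨k, Finset.mem_range.2 hk, rfl⟩)
    · have h1 : u₁.coeff k = 1 := by rw [hk, ← hu₁deg]; exact hu₁monic.coeff_natDegree
      rw [h1]; exact ⟨1, map_one _⟩
    · have : u₁.coeff k = 0 := coeff_eq_zero_of_natDegree_lt (by omega)
      rw [this]; exact ⟨0, map_zero _⟩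
  have hg₁lift : g₁ ∈ lifts (algebraMap A L) := by
    rw [lifts_iff_coeff_lifts]
    intro k
    rcases eq_or_ne k 0 with hk | hk0
    · subst hk; rw [hg₁0]; exact ⟨0, map_zero _⟩
    rcases lt_trichotomy k n with hk | hk | hk
    · apply hrange
      apply Algebra.subset_adjoin
      exact Finset.mem_union_right _
        (Finset.mem_image.2 ⟨k, Finset.mem_Ioo.2 ⟨by omega, hk⟩, rfl⟩)
    · have h1 : g₁.coeff k = 1 := by rw [hk, ← hg₁deg]; exact hg₁monic.coeff_natDegree
      rw [h1]; exact ⟨1, map_one _⟩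
    · have : g₁.coeff k = 0 := coeff_eq_zero_of_natDegree_lt (by omega)
      rw [this]; exact ⟨0, map_zero _⟩
  obtain ⟨U, hU⟩ := (mem_lifts _).1 hu₁lift
  obtain ⟨G, hG⟩ := (mem_lifts _).1 hg₁lift
  have hfmap : genericMonic d = (U.comp G).map (algebraMap A L) := by
    rw [Polynomial.map_comp, hU, hG, hfcomp]
  -- every aᵢ lies in A
  have hmem : ∀ i : Fin d, algebraMap R L (MvPolynomial.X i) ∈ A := by
    intro i
    have h1 : algebraMap R L (MvPolynomial.X i) =
        algebraMap A L ((U.comp G).coeff (d - 1 - (i : ℕ))) := by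
      rw [← genericMonic_coeff hd0 i, hfmap, coeff_map]
    rw [h1]
    exact ((U.comp G).coeff (d - 1 - (i : ℕ))).2
  exact card_contradiction hTcard hmem

end Main

/-- **The generic polynomial of degree `d ≥ 2` is indecomposable** in `ℚ(a₁,…,a_d)[x]`. -/
theorem genericMonic_indecomposable (d : ℕ) (hd : 2 ≤ d) :
    IndecomposablePoly (genericMonic d) :=
  genericMonic_indecomposable' hd
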